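/- Let ρ be a positive definite density matrix on ℂ^D, let Δ be a Hermitian D×D matrix, and let L be a Hermitian matrix satisfying the Lyapunov equation ρL + Lρ = 2Δ. Then for every POVM {E_b}_{b=1}^n in which each E_b is nonzero, Σ_{b=1}^n (Re tr(Δ E_b))² / (Re tr(ρ E_b)) ≤ Re tr(Δ L). (The denominators Re tr(ρ E_b) are strictly positive since ρ is positive definite and E_b ≠ 0.) -/

import Mathlib

open Matrix
open scoped ComplexOrder

section SqrtCompat
open scoped MatrixOrder

noncomputable def Matrix.PosSemidef.sqrt {D : ℕ} {A : Matrix (Fin D) (Fin D) ℂ}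
    (_hA : A.PosSemidef) : Matrix (Fin D) (Fin D) ℂ := CFC.sqrt A

lemma Matrix.PosSemidef.posSemidef_sqrt {D : ℕ} {A : Matrix (Fin D) (Fin D) ℂ}
    (hA : A.PosSemidef) : hA.sqrt.PosSemidef := (CFC.sqrt_nonneg A).posSemidef

lemma Matrix.PosSemidef.sqrt_mul_self {D : ℕ} {A : Matrix (Fin D) (Fin D) ℂ}
    (hA : A.PosSemidef) : hA.sqrt * hA.sqrt = A := CFC.sqrt_mul_sqrt_self A hA.nonneg

end SqrtCompat

private lemma trace_NNH_eq_sum {D : ℕ} (N : Matrix (Fin D) (Fin D) ℂ) :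
    (N * Nᴴ).trace = ∑ i, ∑ j, (Complex.normSq (N i j) : ℂ) := by
  simp [Matrix.trace, Matrix.mul_apply, Matrix.diag, Matrix.conjTranspose_apply,
    Complex.mul_conj]

private lemma trace_mul_conjTranspose_re_nonneg {D : ℕ} (N : Matrix (Fin D) (Fin D) ℂ) :
    0 ≤ ((N * Nᴴ).trace).re := by
  rw [trace_NNH_eq_sum]
  simp only [Complex.re_sum]
  exact Finset.sum_nonneg fun i _ => Finset.sum_nonneg fun j _ => by
    simpa using Complex.normSq_nonneg (N i j)

private lemma trace_mul_conjTranspose_re_pos {D : ℕ} (N : Matrix (Fin D) (Fin D) ℂ)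
    (hN : N ≠ 0) : 0 < ((N * Nᴴ).trace).re := by
  rw [trace_NNH_eq_sum]
  simp only [Complex.re_sum]
  obtain ⟨i, j, hij⟩ : ∃ i j, N i j ≠ 0 := by
    by_contra hc
    push_neg at hc
    exact hN (by ext i j; simpa using hc i j)
  refine Finset.sum_pos' (fun i _ => Finset.sum_nonneg fun j _ => by
      simpa using Complex.normSq_nonneg (N i j)) ⟨i, Finset.mem_univ i, ?_⟩
  refine Finset.sum_pos' (fun j _ => by simpa using Complex.normSq_nonneg (N i j))
    ⟨j, Finset.mem_univ j, by simpa [Complex.normSq_pos] using hij⟩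

/-- If `L` is a Hermitian solution of the Lyapunov equation `ρL + Lρ = 2Δ` with `ρ` a
positive definite density matrix and `Δ` Hermitian, then for every POVM with nonzero
elements, `Σ_b (Re tr(Δ E_b))² / (Re tr(ρ E_b)) ≤ Re tr(Δ L)`. -/
theorem fisher_information_le_trace_lyapunov {D n : ℕ}
    (ρ Δ L : Matrix (Fin D) (Fin D) ℂ)
    (hρ : ρ.PosDef) (hρt : ρ.trace = 1)
    (hΔ : Δ.IsHermitian) (hL : L.IsHermitian)
    (hLyap : ρ * L + L * ρ = (2 : ℂ) • Δ)
    (E : Fin n → Matrix (Fin D) (Fin D) ℂ)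
    (hE : ∀ b, (E b).PosSemidef) (hEne : ∀ b, E b ≠ 0) (hEsum : ∑ b, E b = 1) :
    ∑ b, (((Δ * E b).trace).re) ^ 2 / ((ρ * E b).trace).re ≤ ((Δ * L).trace).re := by
  have hρs := hρ.posSemidef
  set R := hρs.sqrt with hR
  have hRH : Rᴴ = R := hρs.posSemidef_sqrt.1
  have hRR : R * R = ρ := hρs.sqrt_mul_self
  -- key positivity: for Hermitian M and each b, 0 ≤ re tr(ρ M E M)
  have key : ∀ (M : Matrix (Fin D) (Fin D) ℂ), Mᴴ = M → ∀ b,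
      0 ≤ ((ρ * M * E b * M).trace).re := by
    intro M hM b
    set S := (hE b).sqrt with hS
    have hSH : Sᴴ = S := (hE b).posSemidef_sqrt.1
    have hSS : S * S = E b := (hE b).sqrt_mul_self
    have htr : (ρ * M * E b * M).trace = ((R * M * S) * (R * M * S)ᴴ).trace := by
      have h1 : (R * M * S) * (R * M * S)ᴴ = R * (M * E b * M * R) := by
        simp only [conjTranspose_mul, hRH, hSH, hM]
        rw [← hSS]; noncomm_ring
      calc (ρ * M * E b * M).trace
          = (ρ * (M * E b * M)).trace := by rw [Matrix.mul_assoc, Matrix.mul_assoc,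
            Matrix.mul_assoc]
        _ = ((M * E b * M) * ρ).trace := Matrix.trace_mul_comm _ _
        _ = ((M * E b * M * R) * R).trace := by rw [Matrix.mul_assoc (M * E b * M) R R, hRR]
        _ = (R * (M * E b * M * R)).trace := Matrix.trace_mul_comm _ _
        _ = ((R * M * S) * (R * M * S)ᴴ).trace := by rw [h1]
    rw [htr]
    exact trace_mul_conjTranspose_re_nonneg _
  -- positivity of denominators
  have hden : ∀ b, 0 < ((ρ * E b).trace).re := by
    intro b
    set S := (hE b).sqrt with hS
    have hSH : Sᴴ = S := (hE b).posSemidef_sqrt.1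
    have hSS : S * S = E b := (hE b).sqrt_mul_self
    have htr : (ρ * E b).trace = ((R * S) * (R * S)ᴴ).trace := by
      have h1 : (R * S) * (R * S)ᴴ = R * (E b * R) := by
        simp only [conjTranspose_mul, hRH, hSH]
        rw [← hSS]; noncomm_ring
      calc (ρ * E b).trace
          = (E b * ρ).trace := Matrix.trace_mul_comm _ _
        _ = ((E b * R) * R).trace := by rw [Matrix.mul_assoc, hRR]
        _ = (R * (E b * R)).trace := Matrix.trace_mul_comm _ _
        _ = ((R * S) * (R * S)ᴴ).trace := by rw [h1]
    rw [htr]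
    refine trace_mul_conjTranspose_re_pos _ ?_
    intro hz
    have hRdet : IsUnit R.det := by
      have hρdet : IsUnit ρ.det := (Matrix.isUnit_iff_isUnit_det ρ).1 hρ.isUnit
      rw [← hRR, Matrix.det_mul] at hρdet
      exact isUnit_of_mul_isUnit_left hρdet
    have : Invertible R := Matrix.invertibleOfIsUnitDet R hRdet
    have hS0 : S = 0 := by
      have := congrArg (fun X => R⁻¹ * X) hz
      simpa [Matrix.inv_mul_cancel_left_of_invertible] using this
    exact hEne b (by rw [← hSS, hS0, Matrix.mul_zero])
  -- identities relating traces
  have hstar : ∀ b, (ρ * E b * L).trace = star ((ρ * L * E b).trace) := by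
    intro b
    have h1 : (ρ * L * E b)ᴴ = E b * (L * ρ) := by
      simp [conjTranspose_mul, hL.eq, hρ.isHermitian.eq, (hE b).1.eq, Matrix.mul_assoc]
    calc (ρ * E b * L).trace = (E b * L * ρ).trace := by
          rw [Matrix.trace_mul_cycle, Matrix.trace_mul_cycle]
      _ = ((ρ * L * E b)ᴴ).trace := by rw [h1, Matrix.mul_assoc]
      _ = star ((ρ * L * E b).trace) := Matrix.trace_conjTranspose _
  have hx : ∀ b, ((Δ * E b).trace).re = ((ρ * L * E b).trace).re := by
    intro b
    have h2 : ((2:ℂ) • Δ) * E b = ρ * L * E b + L * ρ * E b := by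
      rw [← hLyap]; noncomm_ring
    have h3 : (L * ρ * E b).trace = (ρ * E b * L).trace := by
      rw [Matrix.trace_mul_cycle, Matrix.trace_mul_cycle]
    have h4 : ((2:ℂ) * (Δ * E b).trace) = (ρ * L * E b).trace + star ((ρ * L * E b).trace) := by
      have := congrArg Matrix.trace h2
      rw [Matrix.smul_mul, Matrix.trace_smul] at this
      rw [Matrix.trace_add, h3, hstar b] at this
      simpa using this
    have h5 := congrArg Complex.re h4
    simp only [Complex.add_re, Complex.mul_re] at h5
    have : (starRingEnd ℂ ((ρ * L * E b).trace)).re = ((ρ * L * E b).trace).re :=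
      Complex.conj_re _
    rw [show (star ((ρ * L * E b).trace)) = starRingEnd ℂ ((ρ * L * E b).trace) from rfl,
      this] at h5
    norm_num at h5
    linarith
  -- per-term Cauchy-Schwarz via quadratic trick
  have perterm : ∀ b, (((Δ * E b).trace).re) ^ 2 / ((ρ * E b).trace).re
      ≤ ((ρ * L * E b * L).trace).re := by
    intro b
    set a := ((ρ * E b).trace).re with ha'
    set x := ((Δ * E b).trace).re with hx'
    set c := ((ρ * L * E b * L).trace).re with hc'
    have ha : 0 < a := hden b
    set t : ℝ := x / a with ht'
    set M : Matrix (Fin D) (Fin D) ℂ := L - (t : ℂ) • 1 with hM'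
    have hMH : Mᴴ = M := by
      simp [hM', conjTranspose_smul, hL.eq, Complex.conj_ofReal]
    have hexp : ρ * M * E b * M
        = ρ * L * E b * L - (t:ℂ) • (ρ * L * E b) - (t:ℂ) • (ρ * E b * L)
          + ((t:ℂ) * (t:ℂ)) • (ρ * E b) := by
      simp only [hM', mul_sub, sub_mul, Matrix.mul_smul, Matrix.smul_mul, mul_one,
        smul_sub, smul_smul]
      abel
    have hkey := key M hMH b
    rw [hexp] at hkey
    simp only [Matrix.trace_sub, Matrix.trace_add, Matrix.trace_smul, Complex.sub_re,
      Complex.add_re, smul_eq_mul, Complex.re_ofReal_mul] at hkey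
    -- hkey : 0 ≤ c - t * y - t * y' + t*t*a  with y = re tr(ρLE), y' = re tr(ρEL)
    have hy' : ((ρ * E b * L).trace).re = ((ρ * L * E b).trace).re := by
      rw [hstar b]; exact Complex.conj_re _
    rw [hy', ← hx b] at hkey
    have hq : c - t * x - t * x + t * t * a = c - x ^ 2 / a := by
      rw [ht']
      field_simp
      ring
    rw [show ((t:ℂ) * (t:ℂ)) = ((t*t : ℝ) : ℂ) by push_cast; ring] at hkey
    simp only [Complex.re_ofReal_mul] at hkey
    have : 0 ≤ c - x ^ 2 / a := by rw [← hq]; linarith [hkey]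
    linarith
  -- sum the right-hand sides
  have hsum : ∑ b, ((ρ * L * E b * L).trace).re = ((ρ * L * L).trace).re := by
    have h1 : ∑ b, (ρ * L * E b * L) = ρ * L * L := by
      have : ∑ b, (ρ * L * E b * L) = (ρ * L) * (∑ b, E b) * L := by
        rw [Finset.mul_sum, Finset.sum_mul]
      rw [this, hEsum, Matrix.mul_one]
    rw [← Complex.re_sum, ← Matrix.trace_sum, h1]
  -- final identity: re tr(Δ L) = re tr(ρ L L)
  have hfinal : ((Δ * L).trace) = ((ρ * L * L).trace) := by
    have h2 : ((2:ℂ) • Δ) * L = ρ * L * L + L * ρ * L := by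
      rw [← hLyap]; noncomm_ring
    have h3 : (L * ρ * L).trace = (ρ * L * L).trace := by
      rw [Matrix.trace_mul_cycle, Matrix.trace_mul_cycle]
    have := congrArg Matrix.trace h2
    rw [Matrix.smul_mul, Matrix.trace_smul, Matrix.trace_add, h3] at this
    have h4 : (2:ℂ) * (Δ * L).trace = 2 * (ρ * L * L).trace := by
      simpa [two_mul] using this
    have := mul_left_cancel₀ (two_ne_zero (α := ℂ)) h4
    exact this
  calc ∑ b, (((Δ * E b).trace).re) ^ 2 / ((ρ * E b).trace).re
      ≤ ∑ b, ((ρ * L * E b * L).trace).re := Finset.sum_le_sum fun b _ => perterm b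
    _ = ((ρ * L * L).trace).re := hsum
    _ = ((Δ * L).trace).re := by rw [hfinal]
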